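/- Let q_ω be the root in (1,2) of x⁵ = x⁴ + x³ + x − 1 (numerically q_ω ≈ 1.68042). Then q_ω ∈ B_{ℵ₀}: the number x with expansion (100(10)^∞) in base q_ω, which also has the expansion (01111 00(10)^∞), has exactly countably infinitely many expansions in base q_ω. In particular B_{ℵ₀} ∩ (G, q_2) ≠ ∅, where q_2 is the root in (1,2) of x⁴ = 2x² + x + 1. -/

import Mathlib

noncomputable section

/-- `a` is an expansion of `x` in base `q`: all digits `a n` lie in `{0,1}` and
`x = Σ_{n≥1} a_n q^{-n}` (here `a n` is the `(n+1)`-st digit, i.e. indexing is 0-based). -/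
def IsExpansion (q x : ℝ) (a : ℕ → ℕ) : Prop :=
  (∀ n, a n ≤ 1) ∧ x = ∑' n : ℕ, (a n : ℝ) / q ^ (n + 1)

/-- The set of expansions of `x` in base `q`. -/
def expansionsOf (q x : ℝ) : Set (ℕ → ℕ) := {a | IsExpansion q x a}

/-- `U_q`: the set of `x ∈ [0, 1/(q-1)]` having a unique expansion in base `q`. -/
def uniqueExpansionSet (q : ℝ) : Set ℝ :=
  {x | x ∈ Set.Icc 0 (1 / (q - 1)) ∧ ∃! a, IsExpansion q x a}

/-- `B_m` (for finite `m`): bases `q ∈ (G, 2)` for which some `x ∈ I_q` has exactly `m`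
expansions in base `q`. -/
def B (m : ℕ) : Set ℝ :=
  {q | q ∈ Set.Ioo ((1 + Real.sqrt 5) / 2) 2 ∧
    ∃ x ∈ Set.Icc (0:ℝ) (1 / (q - 1)), Cardinal.mk (expansionsOf q x) = m}

/-- `B_{ℵ₀}`: bases `q ∈ (G, 2)` for which some `x ∈ I_q` has exactly countably infinitely
many expansions in base `q`. -/
def Baleph0 : Set ℝ :=
  {q | q ∈ Set.Ioo ((1 + Real.sqrt 5) / 2) 2 ∧
    ∃ x ∈ Set.Icc (0:ℝ) (1 / (q - 1)), Cardinal.mk (expansionsOf q x) = Cardinal.aleph0}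

/-- The Thue–Morse sequence: `thueMorse n` is the parity of the number of 1s in the
binary expansion of `n`. -/
def thueMorse (n : ℕ) : ℕ := ((Nat.digits 2 n).count 1) % 2

/-- A digit `a m` of an expansion of `x` in base `q` is forced if every expansion of `x`
agreeing with `a` before position `m` also agrees at position `m`. -/
def Forced (q x : ℝ) (a : ℕ → ℕ) (m : ℕ) : Prop :=
  ∀ c : ℕ → ℕ, IsExpansion q x c → (∀ i < m, c i = a i) → c m = a m

namespace EJK

variable {q : ℝ}

lemma summable_aux (hq : 1 < q) (a : ℕ → ℕ) (ha : ∀ n, a n ≤ 1) :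
    Summable (fun n => (a n : ℝ) / q ^ (n + 1)) := by
  have h0 : (0:ℝ) < q := lt_trans one_pos hq
  have hlt : (1:ℝ)/q < 1 := by rw [div_lt_one h0]; exact hq
  have hge : (0:ℝ) ≤ 1/q := by positivity
  have hs : Summable (fun n : ℕ => (1/q)^n * (1/q)) :=
    (summable_geometric_of_lt_one hge hlt).mul_right _
  refine Summable.of_nonneg_of_le (fun n => by positivity) (fun n => ?_) hs
  have h1 : (a n : ℝ) ≤ 1 := by exact_mod_cast ha n
  have h2 : (0:ℝ) < q ^ (n+1) := by positivity
  calc (a n : ℝ) / q ^ (n+1) ≤ 1 / q ^ (n+1) := by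
        gcongr
    _ = (1/q)^n * (1/q) := by rw [div_pow, one_pow, pow_succ]; rw [one_div, one_div, one_div, mul_inv]

/-- Forward lemma: an orbit witnessing digits gives an expansion. -/
lemma isExpansion_of_orbit (hq : 1 < q) {x B : ℝ} {a : ℕ → ℕ} (ha : ∀ n, a n ≤ 1)
    (r : ℕ → ℝ) (hr0 : r 0 = x) (hrec : ∀ n, r (n+1) = q * r n - a n)
    (hnn : ∀ n, 0 ≤ r n) (hub : ∀ n, r n ≤ B) :
    IsExpansion q x a := by
  have h0 : (0:ℝ) < q := lt_trans one_pos hq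
  have hq0 : q ≠ 0 := ne_of_gt h0
  refine ⟨ha, ?_⟩
  have hpart : ∀ N, ∑ n ∈ Finset.range N, (a n : ℝ) / q ^ (n+1) = x - r N / q ^ N := by
    intro N
    induction N with
    | zero => simp [hr0]
    | succ N ih =>
      rw [Finset.sum_range_succ, ih, hrec N]
      have hpN : (q:ℝ) ^ N ≠ 0 := pow_ne_zero _ hq0
      field_simp
      ring
  have hsum := summable_aux hq a ha
  have h1 := hsum.hasSum.tendsto_sum_nat
  have h2 : Filter.Tendsto (fun N => ∑ n ∈ Finset.range N, (a n : ℝ) / q ^ (n+1))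
      Filter.atTop (nhds x) := by
    have hz : Filter.Tendsto (fun N : ℕ => r N / q ^ N) Filter.atTop (nhds 0) := by
      have hge : (0:ℝ) ≤ 1/q := by positivity
      have hlt : (1:ℝ)/q < 1 := by rw [div_lt_one h0]; exact hq
      have hgeo : Filter.Tendsto (fun N : ℕ => B * (1/q)^N) Filter.atTop (nhds 0) := by
        have := tendsto_pow_atTop_nhds_zero_of_lt_one hge hlt
        simpa using this.const_mul B
      apply squeeze_zero (fun N => div_nonneg (hnn N) (by positivity)) (fun N => ?_) hgeo
      have : r N / q ^ N ≤ B / q ^ N := by gcongr; exact hub N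
      refine this.trans_eq ?_
      rw [div_pow, one_pow, mul_one_div]
    have : Filter.Tendsto (fun N : ℕ => x - r N / q ^ N) Filter.atTop (nhds (x - 0)) :=
      tendsto_const_nhds.sub hz
    simp only [sub_zero] at this
    convert this using 1
    exact funext hpart
  exact tendsto_nhds_unique h2 h1

/-- Tail value of an expansion from position `n`. -/
def tail (q : ℝ) (a : ℕ → ℕ) (n : ℕ) : ℝ := ∑' m : ℕ, (a (n+m) : ℝ) / q ^ (m+1)

lemma tail_summable (hq : 1 < q) {a : ℕ → ℕ} (ha : ∀ n, a n ≤ 1) (n : ℕ) :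
    Summable (fun m : ℕ => (a (n+m) : ℝ) / q ^ (m+1)) :=
  summable_aux hq (fun m => a (n+m)) (fun m => ha _)

lemma tail_nonneg (hq : 1 < q) {a : ℕ → ℕ} (n : ℕ) : 0 ≤ tail q a n := by
  have h0 : (0:ℝ) < q := lt_trans one_pos hq
  exact tsum_nonneg (fun m => by positivity)

lemma tail_le (hq : 1 < q) {a : ℕ → ℕ} (ha : ∀ n, a n ≤ 1) (n : ℕ) :
    tail q a n ≤ 1 / (q - 1) := by
  have h0 : (0:ℝ) < q := lt_trans one_pos hq
  have hge : (0:ℝ) ≤ 1/q := by positivity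
  have hlt : (1:ℝ)/q < 1 := by rw [div_lt_one h0]; exact hq
  have hs : Summable (fun m : ℕ => (1/q)^m * (1/q)) :=
    (summable_geometric_of_lt_one hge hlt).mul_right _
  have hbound : ∀ m : ℕ, (a (n+m) : ℝ) / q ^ (m+1) ≤ (1/q)^m * (1/q) := by
    intro m
    have h1 : (a (n+m) : ℝ) ≤ 1 := by exact_mod_cast ha (n+m)
    calc (a (n+m) : ℝ) / q ^ (m+1) ≤ 1 / q ^ (m+1) := by gcongr
      _ = (1/q)^m * (1/q) := by
          rw [pow_succ, one_div, mul_inv, div_pow, one_pow, one_div, one_div]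
  have := Summable.tsum_le_tsum hbound (tail_summable hq ha n) hs
  refine this.trans ?_
  rw [tsum_mul_right, tsum_geometric_of_lt_one hge hlt]
  have hq1 : q - 1 ≠ 0 := by linarith
  have heq : (1 - 1/q)⁻¹ * (1/q) = 1/(q-1) := by
    rw [one_sub_div (ne_of_gt h0), inv_div]
    rw [div_mul_div_comm, mul_one, div_eq_div_iff (by positivity) (by positivity)]
    ring
  rw [heq]

lemma tail_zero (hq : 1 < q) {x : ℝ} {a : ℕ → ℕ} (hx : IsExpansion q x a) :
    tail q a 0 = x := by
  unfold tail
  simp only [Nat.zero_add]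
  exact hx.2.symm

lemma tail_succ (hq : 1 < q) {a : ℕ → ℕ} (ha : ∀ n, a n ≤ 1) (n : ℕ) :
    tail q a (n+1) = q * tail q a n - a n := by
  have h0 : (0:ℝ) < q := lt_trans one_pos hq
  have hq0 : q ≠ 0 := ne_of_gt h0
  have hs := tail_summable hq ha n
  have key : tail q a n = (a n : ℝ)/q + (1/q) * tail q a (n+1) := by
    unfold tail
    rw [Summable.tsum_eq_zero_add hs]
    congr 1
    · simp
    · rw [← tsum_mul_left]
      congr 1
      funext m
      have h1 : n + (m + 1) = (n+1) + m := by omega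
      rw [h1, pow_succ, mul_comm (1/q), div_mul_div_comm, mul_one]
  rw [key]
  field_simp
  ring

lemma forced_one (hq : 1 < q) {a : ℕ → ℕ} (ha : ∀ n, a n ≤ 1) (n : ℕ)
    (h : 1 / (q - 1) < q * tail q a n) : a n = 1 := by
  have h1 := tail_le hq ha (n+1)
  have h2 := tail_succ hq ha n
  have h3 : (0:ℝ) < (a n : ℝ) := by
    have : (a n : ℝ) = q * tail q a n - tail q a (n+1) := by linarith
    rw [this]; linarith
  have h4 : 0 < a n := by exact_mod_cast h3
  have h5 := ha n
  omega

lemma forced_zero (hq : 1 < q) {a : ℕ → ℕ} (ha : ∀ n, a n ≤ 1) (n : ℕ)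
    (h : q * tail q a n < 1) : a n = 0 := by
  have h1 := tail_nonneg hq (a := a) (n+1)
  have h2 := tail_succ hq ha n
  have h3 : (a n : ℝ) < 1 := by
    have : (a n : ℝ) = q * tail q a n - tail q a (n+1) := by linarith
    rw [this]; linarith
  have h4 : a n < 1 := by exact_mod_cast h3
  omega

/-! ### The specific base and point -/

def dA : ℕ → ℕ := fun n => if n = 0 then 1 else if n < 3 then 0 else (n - 2) % 2
def dInf : ℕ → ℕ := fun n => if n % 4 = 0 then 0 else 1
def dE (k n : ℕ) : ℕ := if n < 4*k then dInf n else dA (n - 4*k)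

def X (q : ℝ) : ℝ := (q^2+q+1)/(q^4-1)
def Y1 (q : ℝ) : ℝ := q/(q^2-1)
def Y2 (q : ℝ) : ℝ := 1/(q^2-1)

def rA (q : ℝ) (n : ℕ) : ℝ :=
  if n = 0 then X q else if n = 1 then q * X q - 1 else if n = 2 then q^2 * X q - q
  else if n % 2 = 1 then Y1 q else Y2 q
def rInf (q : ℝ) (n : ℕ) : ℝ :=
  if n % 4 = 0 then X q else if n % 4 = 1 then q * X q
  else if n % 4 = 2 then q^2 * X q - 1 else q^3 * X q - q - 1
def rE (q : ℝ) (k n : ℕ) : ℝ := if n < 4*k then rInf q n else rA q (n - 4*k)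

section Algebra
variable {q : ℝ}

lemma q_pos (hq1 : 1 < q) : 0 < q := lt_trans one_pos hq1
lemma q21_pos (hq1 : 1 < q) : 0 < q^2 - 1 := by nlinarith [q_pos hq1]
lemma q41_pos (hq1 : 1 < q) : 0 < q^4 - 1 := by nlinarith [q_pos hq1, q21_pos hq1]
lemma hX4 (hq1 : 1 < q) : X q * (q^4-1) = q^2+q+1 := by
  unfold X; rw [div_mul_cancel₀ _ (ne_of_gt (q41_pos hq1))]
lemma hYe (hq1 : 1 < q) : Y1 q * (q^2-1) = q := by
  unfold Y1; rw [div_mul_cancel₀ _ (ne_of_gt (q21_pos hq1))]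
lemma hZe (hq1 : 1 < q) : Y2 q * (q^2-1) = 1 := by
  unfold Y2; rw [div_mul_cancel₀ _ (ne_of_gt (q21_pos hq1))]
lemma gold (hq1 : 1 < q) (hP : q^5 = q^4+q^3+q-1) : q + 1 < q^2 := by
  have h : q^3*(q^2-q-1) = q-1 := by linear_combination hP
  nlinarith [pow_pos (q_pos hq1) 3]
lemma hq17 (hq1 : 1 < q) (hP : q^5 = q^4+q^3+q-1) : q < 17/10 := by
  by_contra h
  push_neg at h
  have hs : (0:ℝ) ≤ q - 17/10 := by linarith
  nlinarith [pow_nonneg hs 2, pow_nonneg hs 3, pow_nonneg hs 4, pow_nonneg hs 5]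
lemma q4_lt (hq1 : 1 < q) (hP : q^5 = q^4+q^3+q-1) : q^4 < q^3+q^2+q+1 := by
  have h0 := q_pos hq1
  have h17 := hq17 hq1 hP
  nlinarith [mul_nonneg (by linarith : (0:ℝ) ≤ 17/10 - q) (pow_pos h0 3).le,
    mul_nonneg (by linarith : (0:ℝ) ≤ 17/10 - q) (pow_pos h0 2).le,
    mul_nonneg (by linarith : (0:ℝ) ≤ 17/10 - q) h0.le]

lemma idA (hq1 : 1 < q) : q*(q^3*X q - q - 1) - 1 = X q := by
  linear_combination hX4 hq1
lemma idB (hq1 : 1 < q) (hP : q^5 = q^4+q^3+q-1) : q*(q^2*X q - q) = Y1 q := by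
  have h21 := q21_pos hq1
  have h2 : (0:ℝ) < q^2+1 := by positivity
  apply mul_right_cancel₀ (ne_of_gt (mul_pos h21 h2))
  linear_combination (q^3)*hX4 hq1 - (q^2+1)*hYe hq1 - q*hP
lemma idC (hq1 : 1 < q) : q*Y1 q - 1 = Y2 q := by
  apply mul_right_cancel₀ (ne_of_gt (q21_pos hq1))
  linear_combination q*hYe hq1 - hZe hq1
lemma idD (hq1 : 1 < q) : q*Y2 q = Y1 q := by
  apply mul_right_cancel₀ (ne_of_gt (q21_pos hq1))
  linear_combination q*hZe hq1 - hYe hq1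

lemma X_pos (hq1 : 1 < q) : 0 < X q := by
  apply div_pos (by nlinarith [q_pos hq1]) (q41_pos hq1)
lemma Y1_pos (hq1 : 1 < q) : 0 < Y1 q := div_pos (q_pos hq1) (q21_pos hq1)
lemma Y2_pos (hq1 : 1 < q) : 0 < Y2 q := div_pos one_pos (q21_pos hq1)
lemma core_lt (hq1 : 1 < q) : q*X q*(q-1) < 1 := by
  have h41 := q41_pos hq1
  have e : q*X q*(q-1)*(q^4-1) = q^4 - q := by linear_combination (q^2-q)*hX4 hq1
  have h : q*X q*(q-1)*(q^4-1) < 1*(q^4-1) := by rw [e]; linarith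
  exact (mul_lt_mul_iff_left₀ h41).1 h
lemma qX_gt1 (hq1 : 1 < q) (hq2 : q < 2) (hP : q^5 = q^4+q^3+q-1) : 1 < q*X q := by
  have h41 := q41_pos hq1
  have e : q*X q*(q^4-1) = q^3+q^2+q := by linear_combination q*hX4 hq1
  have hlt := q4_lt hq1 hP
  have h : 1*(q^4-1) < q*X q*(q^4-1) := by rw [e]; linarith
  exact (mul_lt_mul_iff_left₀ h41).1 h
lemma Y1_lt1 (hq1 : 1 < q) (hP : q^5 = q^4+q^3+q-1) : Y1 q < 1 := by
  have h21 := q21_pos hq1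
  have hg := gold hq1 hP
  have h : Y1 q*(q^2-1) < 1*(q^2-1) := by rw [hYe hq1]; linarith
  exact (mul_lt_mul_iff_left₀ h21).1 h
lemma Y2_lt1 (hq1 : 1 < q) (hP : q^5 = q^4+q^3+q-1) : Y2 q < 1 := by
  have h21 := q21_pos hq1
  have hg := gold hq1 hP
  have h : Y2 q*(q^2-1) < 1*(q^2-1) := by rw [hZe hq1]; nlinarith
  exact (mul_lt_mul_iff_left₀ h21).1 h
end Algebra

section Ineq
variable {q : ℝ}

lemma onediv_lt (hq1 : 1 < q) {z : ℝ} (h : 1 < z*(q-1)) : 1/(q-1) < z := by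
  rw [div_lt_iff₀ (by linarith : (0:ℝ) < q - 1)]; linarith
lemma le_onediv (hq1 : 1 < q) {z : ℝ} (h : z*(q-1) ≤ 1) : z ≤ 1/(q-1) := by
  rw [le_div_iff₀ (by linarith : (0:ℝ) < q - 1)]; linarith

lemma F_Y (hq1 : 1 < q) (hP : q^5 = q^4+q^3+q-1) : 1/(q-1) < q * Y1 q := by
  apply onediv_lt hq1
  have hg := gold hq1 hP
  have e : (q*Y1 q*(q-1))*(q+1) = q^2 := by linear_combination q*hYe hq1
  have h1 : (0:ℝ) < q + 1 := by linarith
  have h : 1*(q+1) < (q*Y1 q*(q-1))*(q+1) := by rw [e]; linarith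
  exact (mul_lt_mul_iff_left₀ h1).1 h

lemma F_qX (hq1 : 1 < q) (hP : q^5 = q^4+q^3+q-1) : 1/(q-1) < q * (q * X q) := by
  apply onediv_lt hq1
  have h41 := q41_pos hq1
  have e : (q*(q*X q)*(q-1))*(q^4-1) = q^5-q^2 := by linear_combination (q^3-q^2)*hX4 hq1
  have h0 := q_pos hq1
  have hlt : q^4-1 < q^5-q^2 := by nlinarith [mul_pos (mul_pos h0 h0) (by linarith : (0:ℝ) < q - 1)]
  have h : 1*(q^4-1) < (q*(q*X q)*(q-1))*(q^4-1) := by rw [e]; linarith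
  exact (mul_lt_mul_iff_left₀ h41).1 h

lemma F_q2X (hq1 : 1 < q) (hP : q^5 = q^4+q^3+q-1) : 1/(q-1) < q * (q^2 * X q - 1) := by
  apply onediv_lt hq1
  have h41 := q41_pos hq1
  have e : (q*(q^2*X q - 1)*(q-1))*(q^4-1) = q^5 - q^3 + q^2 - q := by
    linear_combination (q^4-q^3)*hX4 hq1
  have h0 := q_pos hq1
  have key : q^5-q^4-q^3+q^2-q+1 = q^2 := by linear_combination hP
  have hlt : q^4-1 < q^5 - q^3 + q^2 - q := by nlinarith [mul_pos h0 h0]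
  have h : 1*(q^4-1) < (q*(q^2*X q - 1)*(q-1))*(q^4-1) := by rw [e]; linarith
  exact (mul_lt_mul_iff_left₀ h41).1 h

lemma F_q3X (hq1 : 1 < q) (hq2 : q < 2) (hP : q^5 = q^4+q^3+q-1) :
    1/(q-1) < q * (q^3 * X q - q - 1) := by
  apply onediv_lt hq1
  have h41 := q41_pos hq1
  have e : (q*(q^3*X q - q - 1)*(q-1))*(q^4-1) = q^7 - q^4 - (q^3-q)*(q^4-1) := by
    linear_combination (q^5-q^4)*hX4 hq1
  have h0 := q_pos hq1
  have key : q^5-2*q^4+q^3-q+1 = q^3*(2-q) := by linear_combination hP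
  have hlt : q^4-1 < q^7 - q^4 - (q^3-q)*(q^4-1) := by
    nlinarith [mul_pos (pow_pos h0 3) (by linarith : (0:ℝ) < 2 - q)]
  have h : 1*(q^4-1) < (q*(q^3*X q - q - 1)*(q-1))*(q^4-1) := by rw [e]; linarith
  exact (mul_lt_mul_iff_left₀ h41).1 h

lemma F0_qX1 (hq1 : 1 < q) (hP : q^5 = q^4+q^3+q-1) : q * (q * X q - 1) < 1 := by
  have h41 := q41_pos hq1
  have e : (q*(q*X q - 1))*(q^4-1) = q^4+q^3+q^2 - q*(q^4-1) := by
    linear_combination (q^2)*hX4 hq1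
  have hg := gold hq1 hP
  have h0 := q_pos hq1
  have hlt : q^4+q^3+q^2 - q*(q^4-1) < 1*(q^4-1) := by
    nlinarith [sq_nonneg (q^2-q-1), mul_pos h0 h0]
  have h : (q*(q*X q - 1))*(q^4-1) < 1*(q^4-1) := by rw [e]; linarith
  exact (mul_lt_mul_iff_left₀ h41).1 h

lemma F0_q2Xq (hq1 : 1 < q) (hP : q^5 = q^4+q^3+q-1) : q * (q^2 * X q - q) < 1 := by
  rw [idB hq1 hP]; exact Y1_lt1 hq1 hP

lemma F0_Y2 (hq1 : 1 < q) (hP : q^5 = q^4+q^3+q-1) : q * Y2 q < 1 := by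
  rw [idD hq1]; exact Y1_lt1 hq1 hP

lemma U_qX (hq1 : 1 < q) : q * X q ≤ 1/(q-1) := le_onediv hq1 (le_of_lt (core_lt hq1))
lemma U_X (hq1 : 1 < q) : X q ≤ 1/(q-1) := by
  have := U_qX hq1
  nlinarith [X_pos hq1]
lemma U_q2X1 (hq1 : 1 < q) : q^2 * X q - 1 ≤ 1/(q-1) := by
  apply le_onediv hq1
  nlinarith [mul_lt_mul_of_pos_left (core_lt hq1) (q_pos hq1)]
lemma U_q2Xq (hq1 : 1 < q) : q^2 * X q - q ≤ 1/(q-1) := by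
  apply le_onediv hq1
  nlinarith [mul_lt_mul_of_pos_left (core_lt hq1) (q_pos hq1), sq_nonneg (q-1)]
lemma U_q3X (hq1 : 1 < q) : q^3 * X q - q - 1 ≤ 1/(q-1) := by
  apply le_onediv hq1
  nlinarith [mul_lt_mul_of_pos_left (core_lt hq1) (pow_pos (q_pos hq1) 2)]
lemma one_le_onediv (hq1 : 1 < q) (hq2 : q < 2) : 1 ≤ 1/(q-1) := by
  rw [le_div_iff₀ (by linarith : (0:ℝ) < q - 1)]; linarith
lemma U_Y1 (hq1 : 1 < q) (hq2 : q < 2) (hP : q^5 = q^4+q^3+q-1) : Y1 q ≤ 1/(q-1) :=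
  le_trans (le_of_lt (Y1_lt1 hq1 hP)) (one_le_onediv hq1 hq2)
lemma U_Y2 (hq1 : 1 < q) (hq2 : q < 2) (hP : q^5 = q^4+q^3+q-1) : Y2 q ≤ 1/(q-1) :=
  le_trans (le_of_lt (Y2_lt1 hq1 hP)) (one_le_onediv hq1 hq2)
lemma U_qX1 (hq1 : 1 < q) : q * X q - 1 ≤ 1/(q-1) := by
  have := U_qX hq1; linarith

lemma L_qX1 (hq1 : 1 < q) (hq2 : q < 2) (hP : q^5 = q^4+q^3+q-1) : 0 ≤ q * X q - 1 := by
  have := qX_gt1 hq1 hq2 hP; linarith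
lemma L_q2X1 (hq1 : 1 < q) (hq2 : q < 2) (hP : q^5 = q^4+q^3+q-1) : 0 ≤ q^2 * X q - 1 := by
  have h := qX_gt1 hq1 hq2 hP
  nlinarith [X_pos hq1, q_pos hq1]
lemma L_q2Xq (hq1 : 1 < q) (hq2 : q < 2) (hP : q^5 = q^4+q^3+q-1) : 0 ≤ q^2 * X q - q := by
  have h := qX_gt1 hq1 hq2 hP
  nlinarith [q_pos hq1]
lemma L_q3X (hq1 : 1 < q) (hq2 : q < 2) (hP : q^5 = q^4+q^3+q-1) : 0 ≤ q^3 * X q - q - 1 := by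
  have h := qX_gt1 hq1 hq2 hP
  have hg := gold hq1 hP
  nlinarith [q_pos hq1, mul_pos (q_pos hq1) (q_pos hq1)]
end Ineq

section Orbits
variable {q : ℝ}

lemma dA_le : ∀ n, dA n ≤ 1 := by
  intro n; unfold dA
  split <;> [omega; split] <;> [omega; omega]
lemma dInf_le : ∀ n, dInf n ≤ 1 := by
  intro n; unfold dInf; split <;> omega
lemma dE_le (k : ℕ) : ∀ n, dE k n ≤ 1 := by
  intro n; unfold dE; split
  · exact dInf_le n
  · exact dA_le _

lemma rA_nonneg (hq1 : 1 < q) (hq2 : q < 2) (hP : q^5 = q^4+q^3+q-1) (n : ℕ) :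
    0 ≤ rA q n := by
  unfold rA
  split
  · exact (X_pos hq1).le
  · split
    · exact L_qX1 hq1 hq2 hP
    · split
      · exact L_q2Xq hq1 hq2 hP
      · split
        · exact (Y1_pos hq1).le
        · exact (Y2_pos hq1).le

lemma rA_le (hq1 : 1 < q) (hq2 : q < 2) (hP : q^5 = q^4+q^3+q-1) (n : ℕ) :
    rA q n ≤ 1/(q-1) := by
  unfold rA
  split
  · exact U_X hq1
  · split
    · exact U_qX1 hq1
    · split
      · exact U_q2Xq hq1
      · split
        · exact U_Y1 hq1 hq2 hP
        · exact U_Y2 hq1 hq2 hP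

lemma rInf_nonneg (hq1 : 1 < q) (hq2 : q < 2) (hP : q^5 = q^4+q^3+q-1) (n : ℕ) :
    0 ≤ rInf q n := by
  unfold rInf
  split
  · exact (X_pos hq1).le
  · split
    · exact (mul_pos (q_pos hq1) (X_pos hq1)).le
    · split
      · exact L_q2X1 hq1 hq2 hP
      · exact L_q3X hq1 hq2 hP

lemma rInf_le (hq1 : 1 < q) (hq2 : q < 2) (hP : q^5 = q^4+q^3+q-1) (n : ℕ) :
    rInf q n ≤ 1/(q-1) := by
  unfold rInf
  split
  · exact U_X hq1
  · split
    · exact U_qX hq1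
    · split
      · exact U_q2X1 hq1
      · exact U_q3X hq1

lemma rE_nonneg (hq1 : 1 < q) (hq2 : q < 2) (hP : q^5 = q^4+q^3+q-1) (k n : ℕ) :
    0 ≤ rE q k n := by
  unfold rE; split
  · exact rInf_nonneg hq1 hq2 hP n
  · exact rA_nonneg hq1 hq2 hP _

lemma rE_le (hq1 : 1 < q) (hq2 : q < 2) (hP : q^5 = q^4+q^3+q-1) (k n : ℕ) :
    rE q k n ≤ 1/(q-1) := by
  unfold rE; split
  · exact rInf_le hq1 hq2 hP n
  · exact rA_le hq1 hq2 hP _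

lemma rA_rec (hq1 : 1 < q) (hP : q^5 = q^4+q^3+q-1) (n : ℕ) :
    rA q (n+1) = q * rA q n - dA n := by
  rcases n with _ | _ | _ | m
  · -- n = 0
    simp [rA, dA]
  · -- n = 1
    simp [rA, dA]; ring
  · -- n = 2 : rA 3 = Y1 = q*(q^2 X - q) - 0
    have := idB hq1 hP
    simp [rA, dA]
    linarith
  · -- n = m + 3 ≥ 3
    rcases Nat.even_or_odd m with ⟨t, ht⟩ | ⟨t, ht⟩
    · -- m even: n = 2t+3 odd: rA n = Y1, rA (n+1) = Y2, digit (n-2)%2 = 1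
      have h1 : rA q (m+3) = Y1 q := by
        unfold rA; subst ht
        have : (t+t+3) % 2 = 1 := by omega
        simp [this]
      have h2 : rA q (m+4) = Y2 q := by
        unfold rA; subst ht
        have : (t+t+4) % 2 = 0 := by omega
        simp [this]
      have h3 : dA (m+3) = 1 := by
        unfold dA; subst ht
        have : (t+t+3) - 2 = 2*t+1 := by omega
        simp [this]
      rw [h2, h3]
      rw [show m+3+1 = m+4 from rfl] at *
      rw [h1]
      have := idC hq1
      push_cast
      linarith
    · -- m odd: n = 2t+4 even ≥ 4: rA n = Y2, rA (n+1) = Y1, digit = 0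
      have h1 : rA q (m+3) = Y2 q := by
        unfold rA; subst ht
        have : (2*t+1+3) % 2 = 0 := by omega
        simp [this]
      have h2 : rA q (m+4) = Y1 q := by
        unfold rA; subst ht
        have : (2*t+1+4) % 2 = 1 := by omega
        simp [this]
      have h3 : dA (m+3) = 0 := by
        unfold dA; subst ht
        have : (2*t+1+3) - 2 = 2*(t+1) := by omega
        simp [this]
      rw [show m+3+1 = m+4 from rfl] at *
      rw [h1, h2, h3]
      have := idD hq1
      push_cast
      linarith
end Orbits

section Orbits2
variable {q : ℝ}

lemma rInf_rec (hq1 : 1 < q) (n : ℕ) :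
    rInf q (n+1) = q * rInf q n - dInf n := by
  have h4 : n % 4 = 0 ∨ n % 4 = 1 ∨ n % 4 = 2 ∨ n % 4 = 3 := by omega
  rcases h4 with h | h | h | h
  · have h' : (n+1) % 4 = 1 := by omega
    simp [rInf, dInf, h, h']
  · have h' : (n+1) % 4 = 2 := by omega
    simp [rInf, dInf, h, h']
    ring
  · have h' : (n+1) % 4 = 3 := by omega
    simp [rInf, dInf, h, h']
    ring
  · have h' : (n+1) % 4 = 0 := by omega
    simp [rInf, dInf, h, h']
    linarith [idA hq1]

lemma rE_rec (hq1 : 1 < q) (hP : q^5 = q^4+q^3+q-1) (k n : ℕ) :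
    rE q k (n+1) = q * rE q k n - dE k n := by
  unfold rE dE
  by_cases h1 : n < 4*k
  · by_cases h2 : n + 1 < 4*k
    · simp only [if_pos h1, if_pos h2]
      exact rInf_rec hq1 n
    · -- n+1 = 4*k
      have h3 : n + 1 = 4*k := by omega
      simp only [if_pos h1, if_neg h2]
      have h5 : rA q (n+1-4*k) = X q := by
        rw [h3]; simp [rA]
      rw [h5]
      have h6 : n % 4 = 3 := by omega
      have := rInf_rec hq1 n
      have h7 : rInf q (n+1) = X q := by
        unfold rInf
        have : (n+1) % 4 = 0 := by omega
        simp [this]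
      rw [h7] at this
      rw [this]
  · have h2 : ¬ (n + 1 < 4*k) := by omega
    simp only [if_neg h1, if_neg h2]
    have h3 : n + 1 - 4*k = (n - 4*k) + 1 := by omega
    rw [h3]
    exact rA_rec hq1 hP (n - 4*k)

lemma rA_zero : rA q 0 = X q := by simp [rA]
lemma rE_zero : rE q k 0 = X q := by
  unfold rE
  by_cases h : 0 < 4*k
  · simp only [if_pos h]; simp [rInf]
  · simp only [if_neg h]; simp [rA]

lemma isExpansion_dE (hq1 : 1 < q) (hq2 : q < 2) (hP : q^5 = q^4+q^3+q-1) (k : ℕ) :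
    IsExpansion q (X q) (dE k) :=
  isExpansion_of_orbit hq1 (dE_le k) (rE q k) rE_zero
    (fun n => rE_rec hq1 hP k n) (fun n => rE_nonneg hq1 hq2 hP k n)
    (fun n => rE_le hq1 hq2 hP k n)

lemma isExpansion_dInf (hq1 : 1 < q) (hq2 : q < 2) (hP : q^5 = q^4+q^3+q-1) :
    IsExpansion q (X q) dInf :=
  isExpansion_of_orbit hq1 dInf_le (rInf q) (by simp [rInf])
    (fun n => rInf_rec hq1 n) (fun n => rInf_nonneg hq1 hq2 hP n)
    (fun n => rInf_le hq1 hq2 hP n)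
end Orbits2

section Classify
variable {q : ℝ}

lemma tail_dA (hq1 : 1 < q) (hq2 : q < 2) (hP : q^5 = q^4+q^3+q-1) {a : ℕ → ℕ}
    (ha : ∀ n, a n ≤ 1) (m : ℕ) (hm : tail q a m = X q) (h1 : a m = 1) :
    ∀ j, a (m+j) = dA j ∧ tail q a (m+j) = rA q j := by
  intro j
  induction j with
  | zero => exact ⟨by simpa [dA] using h1, by simpa [rA] using hm⟩
  | succ j ih =>
    obtain ⟨hd, ht⟩ := ih
    have hts : tail q a (m+(j+1)) = rA q (j+1) := by
      have := tail_succ hq1 ha (m+j)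
      rw [show m+j+1 = m+(j+1) from rfl] at this
      rw [this, ht, hd, rA_rec hq1 hP j]
    refine ⟨?_, hts⟩
    rcases j with _ | _ | j
    · -- j+1 = 1 : state q*X-1, forced 0
      have hz : a (m+1) = 0 := by
        apply forced_zero hq1 ha
        rw [hts]
        simpa [rA] using F0_qX1 hq1 hP
      rw [hz]; simp [dA]
    · -- j+1 = 2 : state q^2 X - q, forced 0
      have hz : a (m+2) = 0 := by
        apply forced_zero hq1 ha
        rw [hts]
        simpa [rA] using F0_q2Xq hq1 hP
      rw [hz]; simp [dA]
    · -- j+1 = j+3 ≥ 3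
      rcases Nat.even_or_odd j with ⟨t, htt⟩ | ⟨t, htt⟩
      · -- j even : j+3 odd : state Y1, forced 1
        have hY : rA q (j+3) = Y1 q := by
          unfold rA; subst htt
          have : (t+t+3) % 2 = 1 := by omega
          simp [this]
        have hz : a (m+(j+3)) = 1 := by
          apply forced_one hq1 ha
          rw [hts, hY]
          exact F_Y hq1 hP
        rw [hz]
        subst htt
        unfold dA
        rw [if_neg (by omega : ¬(t+t+2+1 = 0)), if_neg (by omega : ¬(t+t+2+1 < 3))]
        omega
      · -- j odd : j+3 even : state Y2, forced 0
        have hY : rA q (j+3) = Y2 q := by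
          unfold rA; subst htt
          have : (2*t+1+3) % 2 = 0 := by omega
          simp [this]
        have hz : a (m+(j+3)) = 0 := by
          apply forced_zero hq1 ha
          rw [hts, hY]
          exact F0_Y2 hq1 hP
        rw [hz]
        subst htt
        unfold dA
        rw [if_neg (by omega : ¬(2*t+1+2+1 = 0)), if_neg (by omega : ¬(2*t+1+2+1 < 3))]
        omega

lemma tail_block (hq1 : 1 < q) (hq2 : q < 2) (hP : q^5 = q^4+q^3+q-1) {a : ℕ → ℕ}
    (ha : ∀ n, a n ≤ 1) (m : ℕ) (hm : tail q a m = X q) (h0 : a m = 0) :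
    a (m+1) = 1 ∧ a (m+2) = 1 ∧ a (m+3) = 1 ∧ tail q a (m+4) = X q := by
  have t1 : tail q a (m+1) = q * X q := by
    rw [tail_succ hq1 ha m, hm, h0]; simp
  have a1 : a (m+1) = 1 := by
    apply forced_one hq1 ha
    rw [t1]; exact F_qX hq1 hP
  have t2 : tail q a (m+2) = q^2 * X q - 1 := by
    rw [show m+2 = (m+1)+1 from rfl, tail_succ hq1 ha (m+1), t1, a1]
    push_cast; ring
  have a2 : a (m+2) = 1 := by
    apply forced_one hq1 ha
    rw [t2]; exact F_q2X hq1 hP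
  have t3 : tail q a (m+3) = q^3 * X q - q - 1 := by
    rw [show m+3 = (m+2)+1 from rfl, tail_succ hq1 ha (m+2), t2, a2]
    push_cast; ring
  have a3 : a (m+3) = 1 := by
    apply forced_one hq1 ha
    rw [t3]; exact F_q3X hq1 hq2 hP
  have t4 : tail q a (m+4) = X q := by
    rw [show m+4 = (m+3)+1 from rfl, tail_succ hq1 ha (m+3), t3, a3]
    push_cast
    linarith [idA hq1]
  exact ⟨a1, a2, a3, t4⟩

lemma classify (hq1 : 1 < q) (hq2 : q < 2) (hP : q^5 = q^4+q^3+q-1) {a : ℕ → ℕ}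
    (hx : IsExpansion q (X q) a) :
    a = dInf ∨ ∃ k, a = dE k := by
  have ha := hx.1
  have hdinf0 : ∀ n : ℕ, dInf (4*n) = 0 := by
    intro n; simp [dInf, Nat.mul_mod_right]
  have tailX : ∀ n, (∀ i < 4*n, a i = dInf i) → tail q a (4*n) = X q := by
    intro n
    induction n with
    | zero => intro _; simpa using tail_zero hq1 hx
    | succ n ih =>
      intro h
      have hPn : ∀ i < 4*n, a i = dInf i := fun i hi => h i (by omega)
      have ht := ih hPn
      have h0 : a (4*n) = 0 := by
        rw [h (4*n) (by omega), hdinf0]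
      have hb := tail_block hq1 hq2 hP ha (4*n) ht h0
      have : 4*(n+1) = 4*n+4 := by omega
      rw [this]
      exact hb.2.2.2
  by_cases hc : ∀ n, (∀ i < 4*n, a i = dInf i) → a (4*n) = 0
  · left
    have hall : ∀ n, ∀ i < 4*n, a i = dInf i := by
      intro n
      induction n with
      | zero => intro i hi; omega
      | succ n ih =>
        have h0 := hc n ih
        have ht := tailX n ih
        have hb := tail_block hq1 hq2 hP ha (4*n) ht h0
        intro i hi
        rcases (by omega : i < 4*n ∨ i = 4*n ∨ i = 4*n+1 ∨ i = 4*n+2 ∨ i = 4*n+3)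
          with h | h | h | h | h
        · exact ih i h
        · rw [h, h0, hdinf0]
        · rw [h, hb.1]
          unfold dInf
          have : (4*n+1) % 4 = 1 := by omega
          simp [this]
        · rw [h, hb.2.1]
          unfold dInf
          have : (4*n+2) % 4 = 2 := by omega
          simp [this]
        · rw [h, hb.2.2.1]
          unfold dInf
          have : (4*n+3) % 4 = 3 := by omega
          simp [this]
    funext i
    exact hall (i+1) i (by omega)
  · right
    push_neg at hc
    obtain ⟨n, hPn, hne⟩ := hc
    have h1 : a (4*n) = 1 := by
      have := ha (4*n); omega
    have ht := tailX n hPn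
    have htd := tail_dA hq1 hq2 hP ha (4*n) ht h1
    refine ⟨n, ?_⟩
    funext i
    by_cases h : i < 4*n
    · rw [hPn i h]
      unfold dE
      rw [if_pos h]
    · unfold dE
      rw [if_neg h]
      have h2 := (htd (i - 4*n)).1
      rw [show 4*n + (i - 4*n) = i by omega] at h2
      exact h2
end Classify

section Final
variable {q : ℝ}

lemma expansions_eq (hq1 : 1 < q) (hq2 : q < 2) (hP : q^5 = q^4+q^3+q-1) :
    expansionsOf q (X q) = insert dInf (Set.range dE) := by
  ext a
  constructor
  · intro hx
    rcases classify hq1 hq2 hP hx with h | ⟨k, h⟩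
    · exact Or.inl h
    · exact Or.inr ⟨k, h.symm⟩
  · intro h
    rcases h with h | ⟨k, h⟩
    · rw [h]; exact isExpansion_dInf hq1 hq2 hP
    · rw [← h]; exact isExpansion_dE hq1 hq2 hP k

lemma dE_injective : Function.Injective dE := by
  have key : ∀ k k', k < k' → dE k (4*k) ≠ dE k' (4*k) := by
    intro k k' hlt
    have h1 : dE k (4*k) = 1 := by
      unfold dE
      rw [if_neg (by omega)]
      simp [dA]
    have h2 : dE k' (4*k) = 0 := by
      unfold dE
      rw [if_pos (by omega)]
      simp [dInf, Nat.mul_mod_right]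
    rw [h1, h2]; omega
  intro k k' h
  by_contra hne
  rcases Nat.lt_or_ge k k' with hlt | hge
  · exact key k k' hlt (by rw [h])
  · have hlt : k' < k := by omega
    exact key k' k hlt (by rw [h])

lemma card_eq (hq1 : 1 < q) (hq2 : q < 2) (hP : q^5 = q^4+q^3+q-1) :
    Cardinal.mk (expansionsOf q (X q)) = Cardinal.aleph0 := by
  apply le_antisymm
  · rw [expansions_eq hq1 hq2 hP]
    have hc : (insert dInf (Set.range dE) : Set (ℕ → ℕ)).Countable :=
      (Set.countable_range dE).insert dInf
    exact hc.le_aleph0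
  · have hinf : (expansionsOf q (X q)).Infinite :=
      Set.infinite_of_injective_forall_mem dE_injective
        (fun k => isExpansion_dE hq1 hq2 hP k)
    have := hinf.to_subtype
    exact Cardinal.aleph0_le_mk _
end Final

lemma q2_gt {t : ℝ} (h1 : 1 < t) (he : t^4 = 2*t^2+t+1) : 17/10 < t := by
  by_contra h
  push_neg at h
  have h0 : (0:ℝ) < t := lt_trans one_pos h1
  nlinarith [mul_nonneg (by linarith : (0:ℝ) ≤ 17/10 - t) (pow_pos h0 3).le,
    mul_nonneg (by linarith : (0:ℝ) ≤ 17/10 - t) (pow_pos h0 2).le,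
    mul_nonneg (by linarith : (0:ℝ) ≤ 17/10 - t) h0.le]

lemma golden_lt (hq1 : 1 < q) (hP : q^5 = q^4+q^3+q-1) : (1 + Real.sqrt 5) / 2 < q := by
  have hg := gold hq1 hP
  have h5 : Real.sqrt 5 < 2*q - 1 := by
    rw [Real.sqrt_lt' (by linarith : (0:ℝ) < 2*q - 1)]
    nlinarith
  linarith

end EJK

theorem stmt12 (qom q2 : ℝ)
    (hqom : qom ∈ Set.Ioo (1:ℝ) 2)
    (hqomeq : qom ^ 5 = qom ^ 4 + qom ^ 3 + qom - 1)
    (hq2 : q2 ∈ Set.Ioo (1:ℝ) 2) (hq2eq : q2 ^ 4 = 2 * q2 ^ 2 + q2 + 1) :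
    (∃ x ∈ Set.Icc (0:ℝ) (1 / (qom - 1)),
      IsExpansion qom x (fun n => if n = 0 then 1 else if n < 3 then 0 else (n - 2) % 2) ∧
      IsExpansion qom x
        (fun n => if n = 0 then 0 else if n < 5 then 1 else if n < 7 then 0 else (n - 6) % 2) ∧
      Cardinal.mk (expansionsOf qom x) = Cardinal.aleph0) ∧
    qom ∈ Baleph0 ∧
    (Baleph0 ∩ Set.Ioo ((1 + Real.sqrt 5) / 2) q2).Nonempty := by
  have h1 : (1:ℝ) < qom := hqom.1
  have h2 : qom < 2 := hqom.2
  have hP : qom^5 = qom^4 + qom^3 + qom - 1 := hqomeq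
  have hseq1 : (fun n : ℕ => if n = 0 then 1 else if n < 3 then 0 else (n - 2) % 2)
      = EJK.dE 0 := by
    funext n
    simp [EJK.dE, EJK.dA]
  have hseq2 : (fun n : ℕ => if n = 0 then 0 else if n < 5 then 1 else if n < 7 then 0
      else (n - 6) % 2) = EJK.dE 1 := by
    funext n
    rcases Nat.lt_or_ge n 7 with h | h
    · interval_cases n <;> rfl
    · show _ = EJK.dE 1 n
      unfold EJK.dE EJK.dA
      rw [if_neg (show ¬n = 0 by omega), if_neg (show ¬n < 5 by omega),
        if_neg (show ¬n < 7 by omega), if_neg (show ¬n < 4*1 by omega),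
        if_neg (show ¬(n - 4*1) = 0 by omega), if_neg (show ¬(n - 4*1) < 3 by omega)]
      omega
  have hcard := EJK.card_eq h1 h2 hP
  have hIcc : EJK.X qom ∈ Set.Icc (0:ℝ) (1/(qom - 1)) := ⟨(EJK.X_pos h1).le, EJK.U_X h1⟩
  have hE0 := EJK.isExpansion_dE h1 h2 hP 0
  have hE1 := EJK.isExpansion_dE h1 h2 hP 1
  have hG : (1 + Real.sqrt 5)/2 < qom := EJK.golden_lt h1 hP
  have hq2gt : 17/10 < q2 := EJK.q2_gt hq2.1 hq2eq
  have hlt2 : qom < q2 := lt_trans (EJK.hq17 h1 hP) hq2gt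
  have hmem : qom ∈ Baleph0 := ⟨⟨hG, h2⟩, EJK.X qom, hIcc, hcard⟩
  refine ⟨⟨EJK.X qom, hIcc, ?_, ?_, hcard⟩, hmem, ⟨qom, hmem, hG, hlt2⟩⟩
  · rw [hseq1]; exact hE0
  · rw [hseq2]; exact hE1
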